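/- arXiv:2402.17943 — 3 statements merged into one kernel-verified Lean document; each statement's English description precedes it below -/
import Mathlib

section
/- Let ρ(x) = ∏_{i=1}^d ρ_i(x_i) be a product density on 𝒳 = 𝒳_1×⋯×𝒳_d and Φ be a tensorized feature map indexed by a multi-index set 𝒦 ⊂ ℕ^d, with (Φ(x))_{σ(α)} = ∏_{i=1}^d φ^i_{α_i}(x_i) where {φ^ℓ_k} are orthonormal in L²_{ρ_ℓ}(𝒳_ℓ). Then for the SoS function g_A(x) = Φ(x)^⊤ A Φ(x) ρ(x) with A ⪰ 0, the partial integral ∫_{𝒳_ℓ} g_A(x_{−ℓ}, x'_ℓ) dx'_ℓ equals Φ_{−ℓ}(x_{−ℓ})^⊤ A_{−ℓ} Φ_{−ℓ}(x_{−ℓ}) ρ(x_{−ℓ}), where Φ_{−ℓ} is the reduced tensorized feature map on the variables other than ℓ, A_{−ℓ} = P (A ⊙ M) P^⊤ with M_{σ(α)σ(β)} = δ_{α_ℓ, β_ℓ} and P_{σ_{−ℓ}(α_{−ℓ}) σ(β)} = ∏_{k≠ℓ} δ_{α_k, β_k}, and A_{−ℓ} is positive semidefinite. -/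
open MeasureTheory Matrix
open scoped Classical

/-- Auxiliary: splitting a product over `Fin d` at `ℓ`. -/
lemma prod_split {d : ℕ} (ℓ : Fin d) (f : Fin d → ℝ) :
    (∏ i, f i) = f ℓ * ∏ k : {k : Fin d // k ≠ ℓ}, f k := by
  rw [Finset.prod_eq_mul_prod_sdiff_singleton_of_mem (Finset.mem_univ ℓ) f,
    Finset.prod_subtype (p := fun k => k ≠ ℓ) (Finset.univ \ {ℓ}) (fun k => by simp) f]

/-- Auxiliary: Schur-type fact, the Hadamard product of a PSD matrix with a
"same fiber" 0/1 kernel matrix is PSD. -/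
lemma psd_hadamard_ker {n : Type*} [Fintype n] (f : n → ℕ)
    (A : Matrix n n ℝ) (hA : A.PosSemidef) :
    (A ⊙ (fun a b => if f a = f b then (1:ℝ) else 0)).PosSemidef := by
  classical
  set M : Matrix n n ℝ := fun a b => if f a = f b then (1:ℝ) else 0 with hM
  have hsym : ∀ i j, A j i = A i j := by
    intro i j
    have := hA.1.apply i j
    simpa only [conjTranspose_apply, star_trivial] using this
  rw [posSemidef_iff_dotProduct_mulVec]
  constructor
  · ext i j
    simp only [conjTranspose_apply, hadamard_apply, star_trivial, hM]
    show A j i * (if f j = f i then (1:ℝ) else 0) = A i j * (if f i = f j then (1:ℝ) else 0)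
    rw [hsym i j]
    by_cases h : f i = f j
    · simp [h]
    · rw [if_neg h, if_neg (fun h' => h h'.symm)]
  · intro x
    set S : Finset ℕ := Finset.univ.image f with hS
    set z : ℕ → n → ℝ := fun m i => if f i = m then x i else 0 with hz
    have key : ∀ i j, (∑ m ∈ S, z m i * (A i j * z m j))
        = x i * ((A i j * M i j) * x j) := by
      intro i j
      by_cases h : f i = f j
      · rw [Finset.sum_eq_single_of_mem (f j)
          (Finset.mem_image_of_mem f (Finset.mem_univ j))]
        · simp only [hz, hM, h, if_true, eq_self_iff_true, ite_true]
          ring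
        · intro m _ hm
          simp only [hz]
          rw [if_neg (fun h2 : f i = m => hm (h2.symm.trans h)), zero_mul]
      · have h1 : (∑ m ∈ S, z m i * (A i j * z m j)) = 0 := by
          refine Finset.sum_eq_zero fun m _ => ?_
          simp only [hz]
          by_cases h2 : f i = m
          · rw [show (if f j = m then x j else 0) = 0 from
              if_neg (fun h3 => h (h2.trans h3.symm)), mul_zero, mul_zero]
          · rw [if_neg h2, zero_mul]
        rw [h1, hM]
        simp [h]
    have hform : x ⬝ᵥ (A ⊙ M) *ᵥ x = ∑ m ∈ S, star (z m) ⬝ᵥ A *ᵥ (z m) := by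
      simp only [dotProduct, mulVec, star_trivial, Finset.mul_sum, hadamard_apply]
      conv_rhs => rw [Finset.sum_comm]
      refine Finset.sum_congr rfl fun i _ => ?_
      conv_rhs => rw [Finset.sum_comm]
      refine Finset.sum_congr rfl fun j _ => ?_
      exact (key i j).symm
    rw [star_trivial, hform]
    exact Finset.sum_nonneg fun m _ => hA.dotProduct_mulVec_nonneg (z m)

/-- Marginalization of a tensorized SoS function over one variable.
For a product reference density `ρ(x) = ∏ ρ_i(x_i)`, a tensorized feature map
`Φ_α(x) = ∏_i φ^i_{α_i}(x_i)` indexed by a multi-index set `𝒦`, with the univariate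
family `φ^ℓ` orthonormal in `L²_{ρ_ℓ}`, and `A ⪰ 0`, the partial integral of
`g_A(x) = Φ(x)ᵀ A Φ(x) ρ(x)` over `x_ℓ` equals
`Φ_{−ℓ}(x_{−ℓ})ᵀ A_{−ℓ} Φ_{−ℓ}(x_{−ℓ}) ρ(x_{−ℓ})` with
`A_{−ℓ} = P (A ⊙ M) Pᵀ`, `M_{αβ} = δ_{α_ℓ β_ℓ}`, `P_{α_{−ℓ} β} = ∏_{k≠ℓ} δ_{α_k β_k}`,
and `A_{−ℓ}` is positive semidefinite. -/
theorem sos_marginalization_one_variable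
    {d : ℕ} (ℓ : Fin d)
    (ρ : Fin d → ℝ → ℝ) (φ : Fin d → ℕ → ℝ → ℝ)
    (hρ : ∀ i t, 0 ≤ ρ i t)
    (hint : ∀ a b : ℕ, Integrable (fun t => φ ℓ a t * φ ℓ b t * ρ ℓ t))
    (horth : ∀ a b : ℕ,
      (∫ t, φ ℓ a t * φ ℓ b t * ρ ℓ t) = if a = b then (1 : ℝ) else 0)
    (𝒦 : Finset (Fin d → ℕ))
    (A : Matrix {α // α ∈ 𝒦} {α // α ∈ 𝒦} ℝ) (hA : A.PosSemidef) :
    -- reduced index set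
    let Kred : Finset ({k : Fin d // k ≠ ℓ} → ℕ) :=
      𝒦.image (fun α => fun k : {k : Fin d // k ≠ ℓ} => α k)
    -- the matrices M, P and the reduced matrix A₋ℓ
    let M : Matrix {α // α ∈ 𝒦} {α // α ∈ 𝒦} ℝ :=
      fun a b => if (a : Fin d → ℕ) ℓ = (b : Fin d → ℕ) ℓ then 1 else 0
    let P : Matrix {β // β ∈ Kred} {α // α ∈ 𝒦} ℝ :=
      fun b a => if (fun k : {k : Fin d // k ≠ ℓ} => (a : Fin d → ℕ) k) = (b : _) then 1 else 0
    let Ared : Matrix {β // β ∈ Kred} {β // β ∈ Kred} ℝ := P * (A ⊙ M) * Pᵀ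
    -- full and reduced tensorized feature maps
    let Φ : (Fin d → ℝ) → {α // α ∈ 𝒦} → ℝ :=
      fun x a => ∏ i, φ i ((a : Fin d → ℕ) i) (x i)
    let Φred : (Fin d → ℝ) → {β // β ∈ Kred} → ℝ :=
      fun x b => ∏ k : {k : Fin d // k ≠ ℓ}, φ k ((b : {k : Fin d // k ≠ ℓ} → ℕ) k) (x k)
    (∀ x : Fin d → ℝ,
      (∫ t : ℝ,
        (Φ (Function.update x ℓ t) ⬝ᵥ A.mulVec (Φ (Function.update x ℓ t))) *
          ∏ i, ρ i (Function.update x ℓ t i))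
      = (Φred x ⬝ᵥ Ared.mulVec (Φred x)) *
          ∏ k : {k : Fin d // k ≠ ℓ}, ρ k (x k))
    ∧ Ared.PosSemidef := by
  intro Kred M P Ared Φ Φred
  have hres : ∀ a : {α // α ∈ 𝒦},
      (fun k : {k : Fin d // k ≠ ℓ} => (a : Fin d → ℕ) k) ∈ Kred :=
    fun a => Finset.mem_image_of_mem _ a.2
  have hAM : (A ⊙ M).PosSemidef :=
    psd_hadamard_ker (fun a : {α // α ∈ 𝒦} => (a : Fin d → ℕ) ℓ) A hA
  constructor
  · intro x
    set R : ℝ := ∏ k : {k : Fin d // k ≠ ℓ}, ρ k (x k) with hR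
    set c : {α // α ∈ 𝒦} → ℝ :=
      fun a => ∏ k : {k : Fin d // k ≠ ℓ}, φ k ((a : Fin d → ℕ) k) (x k) with hc
    have hΦ : ∀ t (a : {α // α ∈ 𝒦}),
        Φ (Function.update x ℓ t) a = φ ℓ ((a : Fin d → ℕ) ℓ) t * c a := by
      intro t a
      show (∏ i, φ i ((a : Fin d → ℕ) i) (Function.update x ℓ t i)) = _
      rw [prod_split ℓ, Function.update_self]
      congr 1
      exact Finset.prod_congr rfl fun k _ => by rw [Function.update_of_ne k.2]
    have hρprod : ∀ t, (∏ i, ρ i (Function.update x ℓ t i)) = ρ ℓ t * R := by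
      intro t
      rw [prod_split ℓ, Function.update_self]
      congr 1
      exact Finset.prod_congr rfl fun k _ => by rw [Function.update_of_ne k.2]
    have hintegrand : ∀ t : ℝ,
        (Φ (Function.update x ℓ t) ⬝ᵥ A.mulVec (Φ (Function.update x ℓ t))) *
          ∏ i, ρ i (Function.update x ℓ t i)
        = ∑ p ∈ (Finset.univ ×ˢ Finset.univ :
              Finset ({α // α ∈ 𝒦} × {α // α ∈ 𝒦})),
            (c p.1 * c p.2 * A p.1 p.2 * R) *
              (φ ℓ ((p.1 : Fin d → ℕ) ℓ) t * φ ℓ ((p.2 : Fin d → ℕ) ℓ) t * ρ ℓ t) := by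
      intro t
      rw [hρprod t, Finset.sum_product]
      simp only [dotProduct, mulVec, hΦ t, Finset.sum_mul, Finset.mul_sum]
      refine Finset.sum_congr rfl fun a _ => Finset.sum_congr rfl fun b _ => ?_
      ring
    have hL : (∫ t : ℝ,
        (Φ (Function.update x ℓ t) ⬝ᵥ A.mulVec (Φ (Function.update x ℓ t))) *
          ∏ i, ρ i (Function.update x ℓ t i))
        = ∑ p ∈ (Finset.univ ×ˢ Finset.univ :
              Finset ({α // α ∈ 𝒦} × {α // α ∈ 𝒦})),
            (c p.1 * c p.2 * A p.1 p.2 * R) *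
              (if (p.1 : Fin d → ℕ) ℓ = (p.2 : Fin d → ℕ) ℓ then (1:ℝ) else 0) := by
      simp only [hintegrand]
      rw [integral_finset_sum _ (fun p _ => ((hint _ _).const_mul _))]
      refine Finset.sum_congr rfl fun p _ => ?_
      rw [integral_const_mul, horth]
    rw [hL]
    have hPv : Pᵀ.mulVec (Φred x) = c := by
      funext a
      simp only [mulVec, dotProduct, transpose_apply]
      rw [Finset.sum_eq_single_of_mem
        (⟨fun k : {k : Fin d // k ≠ ℓ} => (a : Fin d → ℕ) k, hres a⟩ :
          {β // β ∈ Kred}) (Finset.mem_univ _)]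
      · rw [show P ⟨fun k : {k : Fin d // k ≠ ℓ} => (a : Fin d → ℕ) k, hres a⟩ a = 1
          from if_pos rfl, one_mul]
      · intro u _ hu
        rw [show P u a = 0 from if_neg (fun h => hu (Subtype.ext h.symm)), zero_mul]
    have hvP : (Φred x) ᵥ* P = c := by
      funext a
      simp only [vecMul, dotProduct]
      rw [Finset.sum_eq_single_of_mem
        (⟨fun k : {k : Fin d // k ≠ ℓ} => (a : Fin d → ℕ) k, hres a⟩ :
          {β // β ∈ Kred}) (Finset.mem_univ _)]
      · rw [show P ⟨fun k : {k : Fin d // k ≠ ℓ} => (a : Fin d → ℕ) k, hres a⟩ a = 1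
          from if_pos rfl, mul_one]
      · intro u _ hu
        rw [show P u a = 0 from if_neg (fun h => hu (Subtype.ext h.symm)), mul_zero]
    have hRHS : Φred x ⬝ᵥ Ared.mulVec (Φred x) = c ⬝ᵥ (A ⊙ M).mulVec c := by
      show Φred x ⬝ᵥ (P * (A ⊙ M) * Pᵀ).mulVec (Φred x) = _
      rw [Matrix.mul_assoc, ← mulVec_mulVec, dotProduct_mulVec, hvP,
        ← mulVec_mulVec, hPv]
    rw [hRHS]
    have hMab : ∀ a b : {α // α ∈ 𝒦},
        M a b = if (a : Fin d → ℕ) ℓ = (b : Fin d → ℕ) ℓ then (1:ℝ) else 0 :=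
      fun _ _ => rfl
    simp only [dotProduct, mulVec, hadamard_apply, hMab, Finset.sum_mul,
      Finset.mul_sum, Finset.sum_product]
    refine Finset.sum_congr rfl fun a _ => Finset.sum_congr rfl fun b _ => ?_
    ring
  · have h2 := hAM.mul_mul_conjTranspose_same P
    have hPT : Pᴴ = Pᵀ := by
      ext u a
      simp [conjTranspose_apply]
    rw [hPT] at h2
    exact h2
end

section
/- Let π_ℓ, ℓ = 0,…,L be a sequence of (unnormalized) bridging densities with π_0 = ρ (the reference) and π_L the target, and let π̃_ℓ be approximations with π̃_0 = ρ. Suppose: (i) D_α(π_ℓ ‖ π_{ℓ−1}) ≤ η for all 1 ≤ ℓ ≤ L; (ii) there exists ω < 1 with D_α(π_ℓ ‖ π̃_ℓ) ≤ ω D_α(π_ℓ ‖ π̃_{ℓ−1}) for all 1 ≤ ℓ ≤ L and D_α(π_0 ‖ ρ) ≤ ω; (iii) there exists ε ≥ 0 with D_α(π_ℓ ‖ π̃_{ℓ−1}) ≤ (1+ε) D_α(π_ℓ ‖ π_{ℓ−1}) + D_α(π_{ℓ−1} ‖ π̃_{ℓ−1}) for all 1 ≤ ℓ ≤ L. Then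 D_α(π_L ‖ π̃_L) ≤ ω(1+ε)η / (1 − ω). -/
/-- Convergence of sequential transport approximation for α-divergences.
Given bridging densities `π_0 = ρ, …, π_L` and approximations `π̃_0 = ρ, …, π̃_L`
satisfying (i) `D(π_ℓ‖π_{ℓ−1}) ≤ η`, (ii) `D(π_ℓ‖π̃_ℓ) ≤ ω D(π_ℓ‖π̃_{ℓ−1})` with
`0 ≤ ω < 1` and `D(π_0‖ρ) ≤ ω`, and (iii) the triangular-type inequality with
slack `ε ≥ 0`, we get `D(π_L‖π̃_L) ≤ ω(1+ε)η/(1−ω)`. -/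
theorem sequential_transport_convergence {X : Type*}
    (D : X → X → ℝ) (hD_nonneg : ∀ f g, 0 ≤ D f g)
    (L : ℕ) (hL : 1 ≤ L)
    (ρ : X) (π πt : ℕ → X)
    (hπ0 : π 0 = ρ) (hπt0 : πt 0 = ρ)
    (η : ℝ)
    (hbridge : ∀ ℓ, 1 ≤ ℓ → ℓ ≤ L → D (π ℓ) (π (ℓ - 1)) ≤ η)
    (ω : ℝ) (hω0 : 0 ≤ ω) (hω1 : ω < 1)
    (happrox : ∀ ℓ, 1 ≤ ℓ → ℓ ≤ L → D (π ℓ) (πt ℓ) ≤ ω * D (π ℓ) (πt (ℓ - 1)))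
    (hinit : D (π 0) ρ ≤ ω)
    (ε : ℝ) (hε : 0 ≤ ε)
    (htri : ∀ ℓ, 1 ≤ ℓ → ℓ ≤ L →
      D (π ℓ) (πt (ℓ - 1)) ≤ (1 + ε) * D (π ℓ) (π (ℓ - 1)) + D (π (ℓ - 1)) (πt (ℓ - 1))) :
    D (π L) (πt L) ≤ ω * (1 + ε) * η / (1 - ω) := by
  have h1ω : 0 < 1 - ω := by linarith
  have hη : 0 ≤ η := le_trans (hD_nonneg (π 1) (π 0)) (by simpa using hbridge 1 le_rfl hL)
  set C := ω * (1 + ε) * η / (1 - ω) with hC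
  have hCkey : ω * (1 + ε) * η = C * (1 - ω) := by
    rw [hC, div_mul_cancel₀ _ (ne_of_gt h1ω)]
  have hC0 : 0 ≤ C := by
    apply div_nonneg _ (le_of_lt h1ω); positivity
  have main : ∀ ℓ, 1 ≤ ℓ → ℓ ≤ L → D (π ℓ) (πt ℓ) ≤ C := by
    intro ℓ
    induction ℓ with
    | zero => omega
    | succ n ih =>
      intro _ hle
      have hstep := happrox (n+1) (by omega) hle
      have htr := htri (n+1) (by omega) hle
      have hb := hbridge (n+1) (by omega) hle
      simp only [Nat.add_sub_cancel] at hstep htr hb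
      rcases Nat.eq_zero_or_pos n with hn | hn
      · subst hn
        have heq : D (π 1) (πt 0) = D (π 1) (π 0) := by rw [hπt0, hπ0]
        rw [heq] at hstep
        norm_num at hstep hb ⊢
        nlinarith [hD_nonneg (π 1) (π 0), mul_nonneg hω0 hη]
      · have ihn := ih hn (by omega)
        have h1 : D (π (n+1)) (πt (n+1)) ≤ ω * ((1 + ε) * η + C) := by
          calc D (π (n+1)) (πt (n+1)) ≤ ω * D (π (n+1)) (πt n) := hstep
            _ ≤ ω * ((1 + ε) * η + C) := by
                apply mul_le_mul_of_nonneg_left _ hω0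
                calc D (π (n+1)) (πt n) ≤ (1 + ε) * D (π (n+1)) (π n) + D (π n) (πt n) := htr
                  _ ≤ (1 + ε) * η + C := by nlinarith
        nlinarith
  exact main L hL le_rfl
end

section
/- Let ρ(ξ_x, ξ_y) = ρ_x(ξ_x) ρ_y(ξ_y) be a product reference probability density and Q(ξ_x, ξ_y) = (Q_1(ξ_y), Q_2(ξ_y, ξ_x)) a block-triangular diffeomorphism with Q_1 a diffeomorphism in ξ_y. Define π̃(x, y) = Q_♯ ρ(x, y). Then for each fixed y, the map ξ_x ↦ Q_2(Q_1^{−1}(y), ξ_x) pushes forward ρ_x to the conditional density π̃(x | y) = π̃(x, y) / ∫ π̃(x', y) dx'. -/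
open MeasureTheory

/-- Determinant of a block lower-triangular linear map on a product space. -/
lemma det_block_triangular {ι κ : Type*} [Fintype ι] [Fintype κ] [DecidableEq ι] [DecidableEq κ]
    {E F : Type*} [AddCommGroup E] [Module ℝ E] [AddCommGroup F] [Module ℝ F]
    (bE : Module.Basis ι ℝ E) (bF : Module.Basis κ ℝ F)
    (L : E × F →ₗ[ℝ] E × F) (h : ∀ w : F, (L (0, w)).1 = 0) :
    L.det = LinearMap.det ((LinearMap.fst ℝ E F).comp (L.comp (LinearMap.inl ℝ E F))) *
            LinearMap.det ((LinearMap.snd ℝ E F).comp (L.comp (LinearMap.inr ℝ E F))) := by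
  classical
  rw [← LinearMap.det_toMatrix (bE.prod bF) L,
      ← LinearMap.det_toMatrix bE ((LinearMap.fst ℝ E F).comp (L.comp (LinearMap.inl ℝ E F))),
      ← LinearMap.det_toMatrix bF ((LinearMap.snd ℝ E F).comp (L.comp (LinearMap.inr ℝ E F))),
      ← Matrix.det_fromBlocks_zero₁₂ _ (Matrix.of fun i j => bF.repr (L (bE j, 0)).2 i) _]
  congr 1
  ext (i | i) (j | j) <;>
    simp [LinearMap.toMatrix_apply, Matrix.fromBlocks, Module.Basis.prod_apply, h]

lemma det_prodMap_id {nx ny : ℕ} (A : (Fin ny → ℝ) →L[ℝ] (Fin ny → ℝ)) :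
    (A.prodMap (ContinuousLinearMap.id ℝ (Fin nx → ℝ))).det = A.det := by
  have := det_block_triangular (Pi.basisFun ℝ (Fin ny)) (Pi.basisFun ℝ (Fin nx))
    ((A.prodMap (ContinuousLinearMap.id ℝ (Fin nx → ℝ))) :
      ((Fin ny → ℝ) × (Fin nx → ℝ)) →ₗ[ℝ] ((Fin ny → ℝ) × (Fin nx → ℝ)))
    (by intro w; simp)
  rw [ContinuousLinearMap.det, this]
  have h1 : (LinearMap.fst ℝ (Fin ny → ℝ) (Fin nx → ℝ)).comp
      (((A.prodMap (ContinuousLinearMap.id ℝ (Fin nx → ℝ))) :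
        ((Fin ny → ℝ) × (Fin nx → ℝ)) →ₗ[ℝ] _).comp
        (LinearMap.inl ℝ (Fin ny → ℝ) (Fin nx → ℝ))) = (A : (Fin ny → ℝ) →ₗ[ℝ] _) := by
    exact LinearMap.ext fun v => by simp
  have h2 : (LinearMap.snd ℝ (Fin ny → ℝ) (Fin nx → ℝ)).comp
      (((A.prodMap (ContinuousLinearMap.id ℝ (Fin nx → ℝ))) :
        ((Fin ny → ℝ) × (Fin nx → ℝ)) →ₗ[ℝ] _).comp
        (LinearMap.inr ℝ (Fin ny → ℝ) (Fin nx → ℝ))) = LinearMap.id := by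
    exact LinearMap.ext fun v => by simp
  rw [h1, h2, LinearMap.det_id, mul_one, ContinuousLinearMap.det]

lemma det_fst_prod {nx ny : ℕ}
    (D : ((Fin ny → ℝ) × (Fin nx → ℝ)) →L[ℝ] (Fin nx → ℝ)) :
    ((ContinuousLinearMap.fst ℝ (Fin ny → ℝ) (Fin nx → ℝ)).prod D).det
      = (D.comp (ContinuousLinearMap.inr ℝ (Fin ny → ℝ) (Fin nx → ℝ))).det := by
  have := det_block_triangular (Pi.basisFun ℝ (Fin ny)) (Pi.basisFun ℝ (Fin nx))
    (((ContinuousLinearMap.fst ℝ (Fin ny → ℝ) (Fin nx → ℝ)).prod D) :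
      ((Fin ny → ℝ) × (Fin nx → ℝ)) →ₗ[ℝ] ((Fin ny → ℝ) × (Fin nx → ℝ)))
    (by intro w; simp)
  rw [ContinuousLinearMap.det, this]
  have h1 : (LinearMap.fst ℝ (Fin ny → ℝ) (Fin nx → ℝ)).comp
      ((((ContinuousLinearMap.fst ℝ (Fin ny → ℝ) (Fin nx → ℝ)).prod D) :
        ((Fin ny → ℝ) × (Fin nx → ℝ)) →ₗ[ℝ] _).comp
        (LinearMap.inl ℝ (Fin ny → ℝ) (Fin nx → ℝ))) = LinearMap.id := by
    exact LinearMap.ext fun v => by simp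
  have h2 : (LinearMap.snd ℝ (Fin ny → ℝ) (Fin nx → ℝ)).comp
      ((((ContinuousLinearMap.fst ℝ (Fin ny → ℝ) (Fin nx → ℝ)).prod D) :
        ((Fin ny → ℝ) × (Fin nx → ℝ)) →ₗ[ℝ] _).comp
        (LinearMap.inr ℝ (Fin ny → ℝ) (Fin nx → ℝ)))
      = ((D.comp (ContinuousLinearMap.inr ℝ (Fin ny → ℝ) (Fin nx → ℝ))) :
          (Fin nx → ℝ) →ₗ[ℝ] _) := by
    exact LinearMap.ext fun v => by simp
  rw [h1, h2, LinearMap.det_id, one_mul, ContinuousLinearMap.det]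

/-- Stochastic map filter: if `ρ(ξ_y, ξ_x) = ρ_y(ξ_y) ρ_x(ξ_x)` is a product reference
probability density and `Q(ξ_y, ξ_x) = (Q_1(ξ_y), Q_2(ξ_y, ξ_x))` is a block-triangular
C¹ diffeomorphism, then for each `y` the map `ξ_x ↦ Q_2(Q_1^{-1}(y), ξ_x)` pushes
`ρ_x` forward to the conditional density `π̃(x|y) = π̃(y,x)/∫ π̃(y,x') dx'` of the
pushforward density `π̃ = Q_♯ ρ`. -/
theorem stochastic_map_filter {nx ny : ℕ}
    (ρx : (Fin nx → ℝ) → ℝ) (ρy : (Fin ny → ℝ) → ℝ)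
    (hρx_pos : ∀ ξ, 0 < ρx ξ) (hρy_pos : ∀ ξ, 0 < ρy ξ)
    (hρx_int : Integrable ρx) (hρy_int : Integrable ρy)
    (hρx_norm : (∫ ξ, ρx ξ) = 1) (hρy_norm : (∫ ξ, ρy ξ) = 1)
    (Q1 Q1inv : (Fin ny → ℝ) → (Fin ny → ℝ))
    (hQ1 : ContDiff ℝ 1 Q1) (hQ1inv : ContDiff ℝ 1 Q1inv)
    (hQ1_li : Function.LeftInverse Q1inv Q1)
    (hQ1_ri : Function.RightInverse Q1inv Q1)
    (Q2 Q2inv : (Fin ny → ℝ) → (Fin nx → ℝ) → (Fin nx → ℝ))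
    (hQ2 : ContDiff ℝ 1 (fun p : (Fin ny → ℝ) × (Fin nx → ℝ) => Q2 p.1 p.2))
    (hQ2inv : ContDiff ℝ 1 (fun p : (Fin ny → ℝ) × (Fin nx → ℝ) => Q2inv p.1 p.2))
    (hQ2_li : ∀ ξy, Function.LeftInverse (Q2inv ξy) (Q2 ξy))
    (hQ2_ri : ∀ ξy, Function.RightInverse (Q2inv ξy) (Q2 ξy)) :
    -- inverse of the block-triangular map Q(ξy, ξx) = (Q1 ξy, Q2 ξy ξx)
    let Qinv : (Fin ny → ℝ) × (Fin nx → ℝ) → (Fin ny → ℝ) × (Fin nx → ℝ) :=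
      fun p => (Q1inv p.1, Q2inv (Q1inv p.1) p.2)
    -- pushforward density π̃ = Q_♯ ρ
    let πt : (Fin ny → ℝ) × (Fin nx → ℝ) → ℝ :=
      fun p => (ρy (Qinv p).1 * ρx (Qinv p).2) * |(fderiv ℝ Qinv p).det|
    ∀ (y : Fin ny → ℝ) (x : Fin nx → ℝ),
      πt (y, x) / (∫ x', πt (y, x'))
        = ρx (Q2inv (Q1inv y) x) * |(fderiv ℝ (Q2inv (Q1inv y)) x).det| := by
  intro Qinv πt y x
  set c : Fin ny → ℝ := Q1inv y with hc
  -- differentiability facts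
  have hGd : Differentiable ℝ (fun p : (Fin ny → ℝ) × (Fin nx → ℝ) => Q2inv p.1 p.2) := hQ2inv.differentiable one_ne_zero
  have hQ1invd : Differentiable ℝ Q1inv := hQ1inv.differentiable one_ne_zero
  have hfd : ∀ (a : Fin ny → ℝ) (w : Fin nx → ℝ), HasFDerivAt (Q2inv a)
      ((fderiv ℝ (fun p : (Fin ny → ℝ) × (Fin nx → ℝ) => Q2inv p.1 p.2) (a, w)).comp
        (ContinuousLinearMap.inr ℝ (Fin ny → ℝ) (Fin nx → ℝ))) w := by
    intro a w
    exact (hGd (a, w)).hasFDerivAt.comp w (hasFDerivAt_prodMk_right a w)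
  have hfderiv : ∀ (a : Fin ny → ℝ) (w : Fin nx → ℝ), fderiv ℝ (Q2inv a) w
      = (fderiv ℝ (fun p : (Fin ny → ℝ) × (Fin nx → ℝ) => Q2inv p.1 p.2) (a, w)).comp
        (ContinuousLinearMap.inr ℝ (Fin ny → ℝ) (Fin nx → ℝ)) := fun a w => (hfd a w).fderiv
  -- determinant factorization
  have hdet : ∀ x' : Fin nx → ℝ, (fderiv ℝ Qinv (y, x')).det
      = |1| * ((fderiv ℝ (Q2inv c) x').det * (fderiv ℝ Q1inv y).det) := by
    intro x'
    have hh : HasFDerivAt (fun p : (Fin ny → ℝ) × (Fin nx → ℝ) => (Q1inv p.1, p.2))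
        ((fderiv ℝ Q1inv y).prodMap (ContinuousLinearMap.id ℝ (Fin nx → ℝ))) (y, x') :=
      HasFDerivAt.prodMap (p := (y, x')) (hQ1invd y).hasFDerivAt (hasFDerivAt_id x')
    have hg : HasFDerivAt (fun q : (Fin ny → ℝ) × (Fin nx → ℝ) => (q.1, Q2inv q.1 q.2))
        ((ContinuousLinearMap.fst ℝ (Fin ny → ℝ) (Fin nx → ℝ)).prod
          (fderiv ℝ (fun p : (Fin ny → ℝ) × (Fin nx → ℝ) => Q2inv p.1 p.2) (c, x'))) (c, x') :=
      (hasFDerivAt_fst).prodMk (hGd (c, x')).hasFDerivAt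
    have hcomp : HasFDerivAt Qinv
        (((ContinuousLinearMap.fst ℝ (Fin ny → ℝ) (Fin nx → ℝ)).prod
          (fderiv ℝ (fun p : (Fin ny → ℝ) × (Fin nx → ℝ) => Q2inv p.1 p.2) (c, x'))).comp
          ((fderiv ℝ Q1inv y).prodMap (ContinuousLinearMap.id ℝ (Fin nx → ℝ)))) (y, x') :=
      hg.comp (y, x') hh
    rw [hcomp.fderiv, ContinuousLinearMap.det, ContinuousLinearMap.toLinearMap_comp,
      LinearMap.det_comp, ← ContinuousLinearMap.det, ← ContinuousLinearMap.det,
      det_fst_prod, det_prodMap_id, ← hfderiv c x', abs_one, one_mul]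
  -- formula for πt
  have hπ : ∀ x' : Fin nx → ℝ, πt (y, x')
      = (ρy c * |(fderiv ℝ Q1inv y).det|) *
        (|(fderiv ℝ (Q2inv c) x').det| * ρx (Q2inv c x')) := by
    intro x'
    show (ρy (Q1inv y) * ρx (Q2inv (Q1inv y) x')) * |(fderiv ℝ Qinv (y, x')).det| = _
    rw [hdet x', hc]
    rw [abs_mul, abs_mul, abs_one]
    ring_nf
  -- change of variables
  have hsurj : Function.Surjective (Q2inv c) := fun z => ⟨Q2 c z, hQ2_li c z⟩
  have hinj : Set.InjOn (Q2inv c) Set.univ :=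
    (Function.LeftInverse.injective (hQ2_ri c)).injOn
  have hdiff : ∀ w, DifferentiableAt ℝ (Q2inv c) w := fun w => (hfd c w).differentiableAt
  have hCOV : (∫ x' : Fin nx → ℝ, |(fderiv ℝ (Q2inv c) x').det| * ρx (Q2inv c x')) = 1 := by
    have h1 := integral_image_eq_integral_abs_det_fderiv_smul (μ := volume) MeasurableSet.univ
      (fun w (_ : w ∈ Set.univ) => ((hdiff w).hasFDerivAt).hasFDerivWithinAt) hinj ρx
    rw [Set.image_univ, hsurj.range_eq, Measure.restrict_univ] at h1
    simp only [smul_eq_mul] at h1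
    rw [hρx_norm] at h1
    exact h1.symm
  -- the normalizing integral
  have hint : (∫ x', πt (y, x')) = ρy c * |(fderiv ℝ Q1inv y).det| := by
    simp_rw [hπ]
    rw [integral_const_mul, hCOV, mul_one]
  -- nonvanishing of the Jacobian of Q1inv
  have hd1 : (fderiv ℝ Q1inv y).det ≠ 0 := by
    have hidd : HasFDerivAt (Q1 ∘ Q1inv) ((fderiv ℝ Q1 c).comp (fderiv ℝ Q1inv y)) y :=
      HasFDerivAt.comp y ((hQ1.differentiable one_ne_zero) c).hasFDerivAt (hQ1invd y).hasFDerivAt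
    have hid2 : HasFDerivAt (Q1 ∘ Q1inv) (ContinuousLinearMap.id ℝ (Fin ny → ℝ)) y := by
      have hfun : Q1 ∘ Q1inv = id := funext hQ1_ri
      rw [hfun]; exact hasFDerivAt_id y
    have heq := hidd.unique hid2
    have hdet1 : (fderiv ℝ Q1 c).det * (fderiv ℝ Q1inv y).det = 1 := by
      rw [ContinuousLinearMap.det, ContinuousLinearMap.det, ← LinearMap.det_comp,
        ← ContinuousLinearMap.toLinearMap_comp, heq, ContinuousLinearMap.coe_id, LinearMap.det_id]
    intro h0
    rw [h0, mul_zero] at hdet1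
    exact one_ne_zero hdet1.symm
  have hden : ρy c * |(fderiv ℝ Q1inv y).det| ≠ 0 :=
    ne_of_gt (mul_pos (hρy_pos c) (abs_pos.mpr hd1))
  rw [hint, hπ x, mul_div_cancel_left₀ _ hden]
  exact mul_comm _ _
end
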